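/- Let f(z) = Σ_{n≥0} a_n z^n be a formal power series over an integral domain with a_0 = 1, and let d_n(t) be the Chow-derangement polynomials of the Toeplitz matrix (a_{n-k})_{n,k≥0}. Then Σ_{n≥0} d_n(t) z^n = (1-t)/(f(tz) - t·f(z)) = 1/(1 - Σ_{n≥2} a_n (t + t^2 + ... + t^{n-1}) z^n). -/

import Mathlib

open Polynomial

def ToeplitzChowDer {A : Type*} [CommRing A] (a : ℕ → A) (d : ℕ → A[X]) : Prop :=
  d 0 = 1 ∧
  (∀ n, (d n).natDegree ≤ n) ∧
  (∀ n, reflect n (d n) = d n) ∧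
  (∀ n, 1 ≤ n →
    reflect n (∑ k ∈ Finset.range (n + 1), C (a (n - k)) * d k) =
      X * ∑ k ∈ Finset.range (n + 1), C (a (n - k)) * d k)

lemma reflect_of_le {A : Type*} [CommRing A] (p : A[X]) {k n : ℕ} (hk : k ≤ n)
    (hdeg : p.natDegree ≤ k) : reflect n p = X ^ (n - k) * reflect k p := by
  have h : n = (n - k) + k := (Nat.sub_add_cancel hk).symm
  calc reflect n p = reflect ((n - k) + k) ((1 : A[X]) * p) := by rw [← h, one_mul]
    _ = reflect (n - k) 1 * reflect k p := reflect_mul 1 p (by simp) hdeg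
    _ = X ^ (n - k) * reflect k p := by
        rw [show (1 : A[X]) = X ^ 0 by simp, reflect_monomial, revAt_le (Nat.zero_le _)]
        simp

lemma reflect_sum' {A : Type*} [CommRing A] {ι : Type*} (s : Finset ι) (f : ι → A[X])
    (N : ℕ) : reflect N (∑ i ∈ s, f i) = ∑ i ∈ s, reflect N (f i) := by
  classical
  induction s using Finset.induction with
  | empty => simp
  | @insert x s h ih => rw [Finset.sum_insert h, Finset.sum_insert h, reflect_add, ih]

/-- `Σ dₙ(t) zⁿ = (1-t)/(f(tz) - t f(z)) = 1/(1 - Σ_{n≥2} aₙ(t + ⋯ + t^{n-1})zⁿ)`,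
stated multiplicatively in `R[t][[z]]`. -/
theorem stmt14 {A : Type*} [CommRing A] [IsDomain A] (a : ℕ → A) (ha : a 0 = 1)
    (d : ℕ → A[X]) (hd : ToeplitzChowDer a d) :
    (PowerSeries.mk fun n => d n) *
        (PowerSeries.mk (fun n => C (a n) * X ^ n) -
          PowerSeries.C (R := A[X]) X * PowerSeries.mk fun n => C (a n)) =
      PowerSeries.C (R := A[X]) (1 - X) ∧
    (PowerSeries.mk fun n => d n) *
        (1 - PowerSeries.mk fun n =>
          if 2 ≤ n then C (a n) * ∑ j ∈ Finset.Icc 1 (n - 1), X ^ j else 0) = 1 := by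
  obtain ⟨hd0, hdeg, hrefl, hH⟩ := hd
  have part1 : (PowerSeries.mk fun n => d n) *
        (PowerSeries.mk (fun n => C (a n) * X ^ n) -
          PowerSeries.C (R := A[X]) X * PowerSeries.mk fun n => C (a n)) =
      PowerSeries.C (R := A[X]) (1 - X) := by
    refine PowerSeries.ext fun n => ?_
    rw [PowerSeries.coeff_mul, Finset.Nat.sum_antidiagonal_eq_sum_range_succ_mk]
    simp only [map_sub, PowerSeries.coeff_mk, PowerSeries.coeff_C_mul]
    rcases Nat.eq_zero_or_pos n with rfl | hn
    · simp [hd0, ha, mul_comm]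
    · have hX : ∑ k ∈ Finset.range (n + 1), C (a (n - k)) * X ^ (n - k) * d k =
          reflect n (∑ k ∈ Finset.range (n + 1), C (a (n - k)) * d k) := by
        rw [reflect_sum']
        refine (Finset.sum_congr rfl fun k hk => ?_).symm
        rw [Finset.mem_range, Nat.lt_succ_iff] at hk
        rw [reflect_C_mul, reflect_of_le (d k) hk (hdeg k), hrefl k]
        ring
      have expand : ∑ k ∈ Finset.range (n + 1),
          d k * (C (a (n - k)) * X ^ (n - k) - X * C (a (n - k))) =
          (∑ k ∈ Finset.range (n + 1), C (a (n - k)) * X ^ (n - k) * d k) -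
          X * ∑ k ∈ Finset.range (n + 1), C (a (n - k)) * d k := by
        rw [Finset.mul_sum, ← Finset.sum_sub_distrib]
        exact Finset.sum_congr rfl fun k _ => by ring
      rw [expand, hX, hH n hn, sub_self]
      simp [PowerSeries.coeff_C, hn.ne']
  refine ⟨part1, ?_⟩
  have hfact : (PowerSeries.mk (fun n => C (a n) * X ^ n) -
          PowerSeries.C (R := A[X]) X * PowerSeries.mk fun n => C (a n)) =
      PowerSeries.C (R := A[X]) ((1 : A[X]) - X) *
        (1 - PowerSeries.mk fun n =>
          if 2 ≤ n then C (a n) * ∑ j ∈ Finset.Icc 1 (n - 1), X ^ j else 0) := by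
    refine PowerSeries.ext fun n => ?_
    rw [PowerSeries.coeff_C_mul]
    simp only [map_sub, PowerSeries.coeff_mk, PowerSeries.coeff_C_mul,
      PowerSeries.coeff_one]
    rcases Nat.lt_or_ge n 2 with h2 | h2
    · interval_cases n <;> simp [ha]
    · rw [if_pos h2, if_neg (by omega : ¬ n = 0)]
      have hsum : ((1 : A[X]) - X) * ∑ j ∈ Finset.Icc 1 (n - 1), X ^ j = X - X ^ n := by
        have h1 : Finset.Icc 1 (n - 1) = Finset.range n \ {0} := by
          ext j
          simp only [Finset.mem_Icc, Finset.mem_sdiff, Finset.mem_range,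
            Finset.mem_singleton]
          omega
        have hr : ∑ j ∈ Finset.Icc 1 (n - 1), X ^ j =
            (∑ j ∈ Finset.range n, (X : A[X]) ^ j) - 1 := by
          rw [h1, Finset.sum_sdiff_eq_sub (by simp; omega)]
          simp
        have hg := geom_sum_mul (X : A[X]) n
        rw [hr, mul_sub, mul_one]
        have h2' : (1 - X) * ∑ j ∈ Finset.range n, (X : A[X]) ^ j = 1 - X ^ n := by
          linear_combination -hg
        rw [h2']; ring
      linear_combination (C (a n)) * hsum
  have h1X : (1 : A[X]) - X ≠ 0 := by
    intro h
    have := congrArg (fun p => Polynomial.coeff p 1) h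
    simp [Polynomial.coeff_one] at this
  have hne : (PowerSeries.C (R := A[X]) ((1 : A[X]) - X)) ≠ 0 := by
    intro h
    apply h1X
    have := congrArg (PowerSeries.constantCoeff (R := A[X])) h
    simpa using this
  have h := part1
  rw [hfact, ← mul_assoc, mul_comm (PowerSeries.mk fun n => d n)
    (PowerSeries.C (R := A[X]) ((1:A[X]) - X)), mul_assoc] at h
  nth_rewrite 2 [show PowerSeries.C (R := A[X]) ((1:A[X]) - X) =
    PowerSeries.C (R := A[X]) ((1:A[X]) - X) * 1 by ring] at h
  exact mul_left_cancel₀ hne h
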